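/- arXiv:2008.10110 — 9 statements merged into one kernel-verified Lean document; each statement's English description precedes it below -/
import Mathlib

section
/- Let G be a Weil-adapted Hausdorff topological group and let S be a subsemigroup of G. If S has a conditionally inner point, then S is a closed subgroup of G (i.e., S is closed in G, contains inverses of all its elements, and contains the identity). -/
/-- A Weil-adapted Hausdorff topological group: the closure of every
subsemigroup is a subgroup.  A subsemigroup with a conditionally inner point
is a closed subgroup. -/
theorem stmt_0 {G : Type*} [Group G] [TopologicalSpace G] [IsTopologicalGroup G]
    [T2Space G]
    (hWeil : ∀ S : Set G, S.Nonempty → (∀ a ∈ S, ∀ b ∈ S, a * b ∈ S) →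
      ∃ H : Subgroup G, closure S = (H : Set G))
    (S : Set G) (hne : S.Nonempty) (hmul : ∀ a ∈ S, ∀ b ∈ S, a * b ∈ S)
    (hcip : ∃ x ∈ S, ∃ U : Set G, IsOpen U ∧ x ∈ closure S ∩ U ∧
      closure S ∩ U ⊆ S) :
    IsClosed S ∧ (∀ a ∈ S, a⁻¹ ∈ S) ∧ (1 : G) ∈ S := by
  obtain ⟨H, hH⟩ := hWeil S hne hmul
  obtain ⟨x, hxS, U, hUopen, ⟨hxcl, hxU⟩, hsub⟩ := hcip
  -- every point of closure S is in S
  have key : closure S ⊆ S := by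
    intro y hy
    have hyH : y ∈ H := by have : y ∈ (H : Set G) := hH ▸ hy; exact this
    have hxH : x ∈ H := by have : x ∈ (H : Set G) := hH ▸ subset_closure hxS; exact this
    -- the open set O = {g | y * g⁻¹ ∈ U}
    set O : Set G := (fun g => y * g⁻¹) ⁻¹' U with hO
    have hOopen : IsOpen O :=
      hUopen.preimage (by continuity)
    have hmemO : x⁻¹ * y ∈ O := by
      simp only [hO, Set.mem_preimage]
      have : y * (x⁻¹ * y)⁻¹ = x := by group
      rw [this]; exact hxU
    have hmemcl : x⁻¹ * y ∈ closure S := by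
      rw [hH]; exact H.mul_mem (H.inv_mem hxH) hyH
    obtain ⟨s, hsO, hsS⟩ := mem_closure_iff.mp hmemcl O hOopen hmemO
    have hsH : s ∈ H := by have : s ∈ (H : Set G) := hH ▸ subset_closure hsS; exact this
    have h1 : y * s⁻¹ ∈ closure S := by
      rw [hH]; exact H.mul_mem hyH (H.inv_mem hsH)
    have h2 : y * s⁻¹ ∈ U := hsO
    have h3 : y * s⁻¹ ∈ S := hsub ⟨h1, h2⟩
    have := hmul _ h3 _ hsS
    simpa using this
  have hSeq : S = closure S := Set.Subset.antisymm subset_closure key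
  refine ⟨?_, ?_, ?_⟩
  · rw [hSeq]; exact isClosed_closure
  · intro a haS
    have haH : a ∈ H := by have : a ∈ (H : Set G) := hH ▸ subset_closure haS; exact this
    rw [hSeq, hH]; exact H.inv_mem haH
  · rw [hSeq, hH]; exact H.one_mem
end

section
/- For a Hausdorff topological group G the following conditions are equivalent: (i) the closure of every subsemigroup of G is a subgroup of G; (ii) every closed subsemigroup of G is a subgroup of G; (iii) for every g ∈ G, the closure of the set {g, g², g³, …} of positive powers of g is a subgroup of G. -/
/-- Closure of a mul-closed set is mul-closed. -/
lemma closure_mul_closed {G : Type*} [Group G] [TopologicalSpace G] [IsTopologicalGroup G]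
    {S : Set G} (hS : ∀ a ∈ S, ∀ b ∈ S, a * b ∈ S) :
    ∀ a ∈ closure S, ∀ b ∈ closure S, a * b ∈ closure S := by
  have hne : Nonempty (Subsemigroup G) := ⟨⊥⟩
  intro a ha b hb
  let S' : Subsemigroup G := ⟨S, fun {x y} hx hy => hS x hx y hy⟩
  exact S'.topologicalClosure.mul_mem (by exact ha) (by exact hb)

/-- For a Hausdorff topological group `G` the following are equivalent:
(i) the closure of every subsemigroup of `G` is a subgroup;
(ii) every closed subsemigroup of `G` is a subgroup;
(iii) for every `g ∈ G` the closure of `{g, g², g³, …}` is a subgroup. -/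
theorem stmt_3 {G : Type*} [Group G] [TopologicalSpace G] [IsTopologicalGroup G]
    [T2Space G] :
    List.TFAE
      [∀ S : Set G, S.Nonempty → (∀ a ∈ S, ∀ b ∈ S, a * b ∈ S) →
          ∃ H : Subgroup G, closure S = (H : Set G),
        ∀ S : Set G, S.Nonempty → (∀ a ∈ S, ∀ b ∈ S, a * b ∈ S) → IsClosed S →
          ∃ H : Subgroup G, S = (H : Set G),
        ∀ g : G, ∃ H : Subgroup G,
          closure {x : G | ∃ n : ℕ, 0 < n ∧ x = g ^ n} = (H : Set G)] := by
  tfae_have 1 → 2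
  · intro h1 S hne hmul hcl
    obtain ⟨H, hH⟩ := h1 S hne hmul
    exact ⟨H, by rwa [hcl.closure_eq] at hH⟩
  tfae_have 2 → 3
  · intro h2 g
    set P : Set G := {x : G | ∃ n : ℕ, 0 < n ∧ x = g ^ n} with hP
    have hPne : P.Nonempty := ⟨g, 1, one_pos, (pow_one g).symm⟩
    have hPmul : ∀ a ∈ P, ∀ b ∈ P, a * b ∈ P := by
      rintro a ⟨n, hn, rfl⟩ b ⟨m, hm, rfl⟩
      exact ⟨n + m, by positivity, (pow_add g n m).symm⟩
    obtain ⟨H, hH⟩ := h2 (closure P) (hPne.closure)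
      (closure_mul_closed hPmul) isClosed_closure
    exact ⟨H, hH⟩
  tfae_have 3 → 1
  · intro h3 S hne hmul
    have hmulT := closure_mul_closed hmul
    -- every element of closure S has its "power closure" subgroup inside closure S
    have key : ∀ g ∈ closure S, ∃ H : Subgroup G,
        closure {x : G | ∃ n : ℕ, 0 < n ∧ x = g ^ n} = (H : Set G) ∧
        (H : Set G) ⊆ closure S ∧ g ∈ (H : Set G) := by
      intro g hg
      obtain ⟨H, hH⟩ := h3 g
      have hsub : {x : G | ∃ n : ℕ, 0 < n ∧ x = g ^ n} ⊆ closure S := by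
        rintro x ⟨n, hn, rfl⟩
        induction n with
        | zero => omega
        | succ k ih =>
          rcases Nat.eq_zero_or_pos k with hk | hk
          · simpa [hk] using hg
          · rw [pow_succ]
            exact hmulT _ (ih hk) _ hg
      have hsub' : (H : Set G) ⊆ closure S := by
        rw [← hH]
        exact closure_minimal hsub isClosed_closure
      have hgH : g ∈ (H : Set G) := by
        rw [← hH]
        exact subset_closure ⟨1, one_pos, (pow_one g).symm⟩
      exact ⟨H, hH, hsub', hgH⟩
    obtain ⟨g₀, hg₀⟩ := hne
    have hg₀' : g₀ ∈ closure S := subset_closure hg₀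
    obtain ⟨H₀, _, hH₀sub, hgH₀⟩ := key g₀ hg₀'
    refine ⟨{ carrier := closure S
              mul_mem' := fun {a b} ha hb => hmulT a ha b hb
              one_mem' := hH₀sub H₀.one_mem
              inv_mem' := ?_ }, rfl⟩
    intro a ha
    obtain ⟨H, _, hHsub, haH⟩ := key a ha
    exact hHsub (H.inv_mem haH)
  tfae_finish
end

section
/- Every precompact Hausdorff topological group is Weil-adapted, i.e., if G is a Hausdorff topological group whose group uniformity is totally bounded, then the closure in G of every subsemigroup of G is a subgroup of G. -/
open Filter Set Topology Uniformity Pointwise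

private lemma pow_mem_semigroup {G : Type*} [Group G] {S : Set G}
    (hmul : ∀ a ∈ S, ∀ b ∈ S, a * b ∈ S) {a : G} (ha : a ∈ S) :
    ∀ n : ℕ, a ^ (n + 1) ∈ S := by
  intro n
  induction n with
  | zero => simpa using ha
  | succ n ih => rw [pow_succ]; exact hmul _ ih _ ha

private lemma inv_mem_closure_aux {G : Type*} [Group G] [UniformSpace G] [IsUniformGroup G]
    (hpre : TotallyBounded (Set.univ : Set G)) {S : Set G}
    (hmul : ∀ a ∈ S, ∀ b ∈ S, a * b ∈ S) {a : G} (ha : a ∈ S) :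
    a⁻¹ ∈ closure S := by
  rw [mem_closure_iff_nhds]
  intro N hN
  have hM : (fun x : G => a⁻¹ * x) ⁻¹' N ∈ 𝓝 (1 : G) := by
    have hc : ContinuousAt (fun x : G => a⁻¹ * x) 1 := (continuous_mul_left a⁻¹).continuousAt
    have := hc.preimage_mem_nhds (by simpa using hN)
    simpa using this
  set M := (fun x : G => a⁻¹ * x) ⁻¹' N with hMdef
  obtain ⟨V, Vopen, V1, hVV⟩ := exists_open_nhds_one_mul_subset hM
  set W := V ∩ V⁻¹ with hWdef
  have hW1 : W ∈ 𝓝 (1 : G) := by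
    apply Filter.inter_mem (Vopen.mem_nhds V1)
    exact (Vopen.preimage continuous_inv).mem_nhds (by simpa using V1)
  have hWV : W ⊆ V := Set.inter_subset_left
  have hWsymm : ∀ x ∈ W, x⁻¹ ∈ W := by
    rintro x ⟨h1, h2⟩
    exact ⟨h2, by simpa using h1⟩
  have hU : {p : G × G | p.2 / p.1 ∈ W} ∈ 𝓤 G := by
    rw [uniformity_eq_comap_nhds_one]
    exact Filter.preimage_mem_comap hW1
  obtain ⟨t, htfin, htcov⟩ := hpre _ hU
  have hchoice : ∀ n : ℕ, ∃ y ∈ t, y / a ^ (2 * n) ∈ W := by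
    intro n
    have := htcov (mem_univ (a ^ (2 * n)))
    simp only [mem_iUnion, exists_prop] at this
    obtain ⟨y, hyt, hy⟩ := this
    exact ⟨y, hyt, hy⟩
  choose f hf1 hf2 using hchoice
  have : Finite t := htfin
  obtain ⟨i, j, hne, hij⟩ :=
    Finite.exists_ne_map_eq_of_infinite (fun n : ℕ => (⟨f n, hf1 n⟩ : t))
  have hfij : f i = f j := by simpa using hij
  have main : ∀ i j : ℕ, i < j → f i = f j → ∃ k : ℕ, 2 ≤ k ∧ a ^ k ∈ M := by
    intro i j hlt hfeq
    refine ⟨2 * j - 2 * i, by omega, ?_⟩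
    have h1 : f i / a ^ (2 * i) ∈ W := hf2 i
    have h2 : f i / a ^ (2 * j) ∈ W := by rw [hfeq]; exact hf2 j
    have hkey : a ^ (2 * j - 2 * i) = (f i / a ^ (2 * j))⁻¹ * (f i / a ^ (2 * i)) := by
      have hsplit : a ^ (2 * j) = a ^ (2 * j - 2 * i) * a ^ (2 * i) := by
        rw [← pow_add]; congr 1; omega
      rw [div_eq_mul_inv, div_eq_mul_inv, mul_inv_rev, inv_inv]
      rw [hsplit]
      group
    rw [hkey]
    exact hVV (Set.mul_mem_mul (hWV (hWsymm _ h2)) (hWV h1))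
  have hex : ∃ k : ℕ, 2 ≤ k ∧ a ^ k ∈ M := by
    rcases hne.lt_or_gt with h | h
    · exact main i j h hfij
    · exact main j i h hfij.symm
  obtain ⟨k, hk2, hkM⟩ := hex
  refine ⟨a ^ (k - 1), ?_, ?_⟩
  · have : a⁻¹ * a ^ k = a ^ (k - 1) := by
      have : a ^ k = a * a ^ (k - 1) := by
        rw [← pow_succ']; congr 1; omega
      rw [this, inv_mul_cancel_left]
    rw [← this]
    exact hkM
  · have : a ^ (k - 1) = a ^ ((k - 2) + 1) := by congr 1; omega
    rw [this]
    exact pow_mem_semigroup hmul ha _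

/-- Every precompact Hausdorff topological group (a group with its group
uniformity totally bounded) is Weil-adapted: the closure of every
subsemigroup is a subgroup. -/
theorem stmt_5 {G : Type*} [Group G] [UniformSpace G] [IsUniformGroup G]
    [T2Space G] (hpre : TotallyBounded (Set.univ : Set G)) :
    ∀ S : Set G, S.Nonempty → (∀ a ∈ S, ∀ b ∈ S, a * b ∈ S) →
      ∃ H : Subgroup G, closure S = (H : Set G) := by
  intro S hS hmul
  have hmul' : ∀ a ∈ closure S, ∀ b ∈ closure S, a * b ∈ closure S := by
    intro a ha b hb
    let T : Subsemigroup G := ⟨S, fun hx hy => hmul _ hx _ hy⟩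
    exact T.topologicalClosure.mul_mem ha hb
  have hinv : ∀ a ∈ closure S, a⁻¹ ∈ closure S := by
    have h1 : S ⊆ (fun x : G => x⁻¹) ⁻¹' closure S := fun a haS =>
      inv_mem_closure_aux hpre hmul haS
    intro a ha
    have h2 : closure S ⊆ (fun x : G => x⁻¹) ⁻¹' closure S :=
      closure_minimal h1 (isClosed_closure.preimage continuous_inv)
    exact h2 ha
  obtain ⟨a, haS⟩ := hS
  have haC : a ∈ closure S := subset_closure haS
  have hone : (1 : G) ∈ closure S := by
    have := hmul' a haC a⁻¹ (hinv a haC)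
    simpa using this
  exact ⟨{ carrier := closure S
           mul_mem' := fun hx hy => hmul' _ hx _ hy
           one_mem' := hone
           inv_mem' := fun hx => hinv _ hx }, rfl⟩
end

section
/- Let G be a precompact Hausdorff topological group and let S be a subsemigroup of G that has a conditionally inner point. Then S is a subgroup of G. -/
open Set Filter Topology Pointwise

/-- In a totally bounded topological group, the inverse of any element lies in the
closure of its positive powers. -/
lemma aux_inv_mem_closure_pow {G : Type*} [Group G] [UniformSpace G] [IsUniformGroup G]
    (hpre : TotallyBounded (Set.univ : Set G)) (a : G) :
    a⁻¹ ∈ closure {x : G | ∃ n : ℕ, 1 ≤ n ∧ a ^ n = x} := by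
  rw [mem_closure_iff]
  intro O hO haO
  have hV : a • O ∈ 𝓝 (1 : G) := by
    refine (hO.smul a).mem_nhds ?_
    exact ⟨a⁻¹, haO, mul_inv_cancel a⟩
  obtain ⟨W, hWmem, hW⟩ := exists_nhds_split_inv hV
  obtain ⟨t, htfin, hcov⟩ :=
    totallyBounded_iff_subset_finite_iUnion_nhds_one.mp hpre W⁻¹ (inv_mem_nhds_one G hWmem)
  have hmem : ∀ n : ℕ, ∃ y, y ∈ t ∧ a ^ (2 * (n + 1)) ∈ y • W⁻¹ := by
    intro n
    simpa only [mem_iUnion₂, exists_prop] using hcov (mem_univ (a ^ (2 * (n + 1))))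
  choose f hf1 hf2 using hmem
  haveI := htfin.to_subtype
  obtain ⟨m, n, hmn, heq⟩ :=
    Finite.exists_ne_map_eq_of_infinite (fun i : ℕ => (⟨f i, hf1 i⟩ : t))
  have heq' : f m = f n := congrArg Subtype.val heq
  -- main claim, symmetric in m < n
  have key : ∀ m n : ℕ, m < n → f m = f n → (O ∩ {x : G | ∃ k : ℕ, 1 ≤ k ∧ a ^ k = x}).Nonempty := by
    intro m n hlt hfe
    obtain ⟨v1, hv1, hv1e⟩ := hf2 m
    obtain ⟨v2, hv2, hv2e⟩ := hf2 n
    rw [hfe] at hv1e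
    -- a ^ (2*(n+1) - 2*(m+1)) = v1⁻¹ * v2
    have hpowr : a ^ (2 * (n + 1) - 2 * (m + 1)) = v1⁻¹ * v2 := by
      have h1 : a ^ (2 * (n + 1)) = a ^ (2 * (m + 1)) * a ^ (2 * (n + 1) - 2 * (m + 1)) := by
        rw [← pow_add]; congr 1; omega
      have h2 : (a ^ (2 * (m + 1)))⁻¹ * a ^ (2 * (n + 1)) = v1⁻¹ * v2 := by
        rw [← hv1e, ← hv2e]
        simp [mul_assoc, smul_eq_mul, mul_inv_rev]
      calc a ^ (2 * (n + 1) - 2 * (m + 1))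
          = (a ^ (2 * (m + 1)))⁻¹ * (a ^ (2 * (m + 1)) * a ^ (2 * (n + 1) - 2 * (m + 1))) := by
            rw [inv_mul_cancel_left]
        _ = (a ^ (2 * (m + 1)))⁻¹ * a ^ (2 * (n + 1)) := by rw [← h1]
        _ = v1⁻¹ * v2 := h2
    have hin : v1⁻¹ * v2 ∈ a • O := by
      have hw1 : v1⁻¹ ∈ W := by simpa using hv1
      have hw2 : v2⁻¹ ∈ W := by simpa using hv2
      have := hW _ hw1 _ hw2
      simpa [div_eq_mul_inv] using this
    rw [← hpowr] at hin
    obtain ⟨o, ho, hoe⟩ := hin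
    -- a ^ (2*(n+1)-2*(m+1) - 1) = a⁻¹ * a ^ (2*(n+1)-2*(m+1)) = o ∈ O
    set k : ℕ := 2 * (n + 1) - 2 * (m + 1) with hk
    have hk2 : 2 ≤ k := by omega
    have hsplit : a ^ k = a * a ^ (k - 1) := by
      rw [← pow_succ']; congr 1; omega
    have hoeq : a ^ (k - 1) = o := by
      have : a * a ^ (k - 1) = a * o := by
        rw [← hsplit, ← hoe]; rfl
      exact mul_left_cancel this
    exact ⟨a ^ (k - 1), hoeq ▸ ho, k - 1, by omega, rfl⟩
  rcases hmn.lt_or_gt with h | h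
  · exact key m n h heq'
  · exact key n m h heq'.symm

/-- A subsemigroup of a precompact Hausdorff topological group that has a
conditionally inner point is a subgroup. -/
theorem stmt_6 {G : Type*} [Group G] [UniformSpace G] [IsUniformGroup G]
    [T2Space G] (hpre : TotallyBounded (Set.univ : Set G))
    (S : Set G) (hne : S.Nonempty) (hmul : ∀ a ∈ S, ∀ b ∈ S, a * b ∈ S)
    (hcip : ∃ x ∈ S, ∃ U : Set G, IsOpen U ∧ x ∈ closure S ∩ U ∧
      closure S ∩ U ⊆ S) :
    ∃ H : Subgroup G, S = (H : Set G) := by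
  obtain ⟨x, hxS, U, hUopen, ⟨hxcl, hxU⟩, hsub⟩ := hcip
  set T := closure S with hT
  have hTmul : ∀ a ∈ T, ∀ b ∈ T, a * b ∈ T := fun a ha b hb =>
    map_mem_closure₂ continuous_mul ha hb hmul
  have hpow : ∀ a ∈ T, ∀ n : ℕ, 1 ≤ n → a ^ n ∈ T := by
    intro a ha n hn
    induction n with
    | zero => omega
    | succ k ih =>
      rcases Nat.eq_zero_or_pos k with hk | hk
      · simpa [hk] using ha
      · rw [pow_succ]
        exact hTmul _ (ih hk) _ ha
  have hTinv : ∀ a ∈ T, a⁻¹ ∈ T := by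
    intro a ha
    have h1 := aux_inv_mem_closure_pow hpre a
    have hsubset : {x : G | ∃ n : ℕ, 1 ≤ n ∧ a ^ n = x} ⊆ T := by
      rintro _ ⟨n, hn, rfl⟩
      exact hpow a ha n hn
    exact closure_minimal hsubset isClosed_closure h1
  have hone : (1 : G) ∈ T := by
    obtain ⟨a, haS⟩ := hne
    have ha : a ∈ T := subset_closure haS
    simpa using hTmul _ ha _ (hTinv a ha)
  refine ⟨{ carrier := T,
            mul_mem' := fun ha hb => hTmul _ ha _ hb,
            one_mem' := hone,
            inv_mem' := fun ha => hTinv _ ha }, ?_⟩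
  apply Set.Subset.antisymm subset_closure
  intro y hy
  have hg : y * x⁻¹ ∈ T := hTmul _ hy _ (hTinv x (subset_closure hxS))
  have hO : IsOpen {g : G | g⁻¹ * y ∈ U} :=
    hUopen.preimage (by continuity)
  have hgO : y * x⁻¹ ∈ {g : G | g⁻¹ * y ∈ U} := by
    simpa [mul_inv_rev, mul_assoc] using hxU
  obtain ⟨s, hsO, hsS⟩ := mem_closure_iff.mp hg _ hO hgO
  have h1 : s⁻¹ * y ∈ T := hTmul _ (hTinv s (subset_closure hsS)) _ hy
  have h2 : s⁻¹ * y ∈ S := hsub ⟨h1, hsO⟩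
  have h3 : s * (s⁻¹ * y) ∈ S := hmul s hsS _ h2
  simpa [mul_inv_cancel_left] using h3
end

section
/- Every open subsemigroup of a precompact Hausdorff topological group is a subgroup. -/
open Filter Set

private lemma key_pow {G : Type*} [Group G] [UniformSpace G] [IsUniformGroup G]
    (hpre : TotallyBounded (Set.univ : Set G)) (a : G) (V : Set G)
    (hV : V ∈ nhds (1 : G)) (N : ℕ) : ∃ k, N ≤ k ∧ a ^ k ∈ V := by
  -- find W with W⁻¹ * W ⊆ V
  obtain ⟨W, hW, hWV⟩ : ∃ W ∈ nhds (1 : G), ∀ x ∈ W, ∀ y ∈ W, x⁻¹ * y ∈ V := by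
    have hc : Continuous fun p : G × G => p.1⁻¹ * p.2 := by continuity
    have hca := hc.continuousAt (x := ((1 : G), (1 : G)))
    rw [ContinuousAt] at hca
    simp only [inv_one, one_mul] at hca
    have hmem := hca hV
    rw [Filter.mem_map, nhds_prod_eq, Filter.mem_prod_iff] at hmem
    obtain ⟨W₁, h₁, W₂, h₂, hsub⟩ := hmem
    exact ⟨W₁ ∩ W₂, inter_mem h₁ h₂, fun x hx y hy =>
      hsub (Set.mk_mem_prod hx.1 hy.2)⟩
  have hU : {p : G × G | p.2 / p.1 ∈ W} ∈ uniformity G := by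
    rw [uniformity_eq_comap_nhds_one G]
    exact Filter.preimage_mem_comap hW
  obtain ⟨t, htf, hcov⟩ := hpre _ hU
  choose y hy hball using fun n : ℕ => Set.mem_iUnion₂.1 (hcov (Set.mem_univ (a ^ n)))
  haveI : Finite t := htf.to_subtype
  obtain ⟨c, hc⟩ := Finite.exists_infinite_fiber (fun n : ℕ => (⟨y n, hy n⟩ : t))
  have hcI : {n : ℕ | y n = (c : G)}.Infinite := by
    have := Set.infinite_coe_iff.1 hc
    refine this.mono ?_
    intro n hn
    simpa [Subtype.ext_iff] using hn
  obtain ⟨m, hm⟩ := hcI.nonempty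
  obtain ⟨n, hn, hlt⟩ := hcI.exists_gt (m + N)
  have hmn : m ≤ n := by omega
  -- the two "W" elements
  have hwn : (c : G) / a ^ n ∈ W := by
    have := hball n; rw [hn] at this; exact this
  have hwm : (c : G) / a ^ m ∈ W := by
    have := hball m; rw [hm] at this; exact this
  refine ⟨n - m, by omega, ?_⟩
  have hid : ((c : G) / a ^ n)⁻¹ * ((c : G) / a ^ m) = a ^ (n - m) := by
    have h1 : a ^ (n - m) * a ^ m = a ^ n := by
      rw [← pow_add, Nat.sub_add_cancel hmn]
    rw [div_eq_mul_inv, div_eq_mul_inv, mul_inv_rev]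
    rw [← h1]
    group
  rw [← hid]
  exact hWV _ hwn _ hwm

/-- Every open subsemigroup of a precompact Hausdorff topological group is a
subgroup. -/
theorem stmt_7 {G : Type*} [Group G] [UniformSpace G] [IsUniformGroup G]
    [T2Space G] (hpre : TotallyBounded (Set.univ : Set G))
    (S : Set G) (hne : S.Nonempty) (hmul : ∀ a ∈ S, ∀ b ∈ S, a * b ∈ S)
    (hopen : IsOpen S) :
    ∃ H : Subgroup G, S = (H : Set G) := by
  have pow_mem : ∀ a ∈ S, ∀ k : ℕ, a ^ (k + 1) ∈ S := by
    intro a ha k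
    induction k with
    | zero => simpa using ha
    | succ k ih => rw [pow_succ]; exact hmul _ ih _ ha
  have hinv : ∀ a ∈ S, a⁻¹ ∈ S := by
    intro a ha
    set V : Set G := {x | x⁻¹ * a ∈ S} with hVdef
    have hVopen : IsOpen V := by
      have : Continuous fun x : G => x⁻¹ * a := by continuity
      exact this.isOpen_preimage S hopen
    have hV1 : (1 : G) ∈ V := by simpa [hVdef] using ha
    obtain ⟨k, hk3, hkV⟩ := key_pow hpre a V (hVopen.mem_nhds hV1) 3
    obtain ⟨j, rfl⟩ := Nat.exists_eq_add_of_le hk3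
    have hs2 : (a ^ (3 + j))⁻¹ * a ∈ S := hkV
    have hs1 : a ^ (j + 1) ∈ S := pow_mem a ha j
    have hfin : a ^ (j + 1) * ((a ^ (3 + j))⁻¹ * a) = a⁻¹ := by group
    have := hmul _ hs1 _ hs2
    rwa [hfin] at this
  obtain ⟨a, ha⟩ := hne
  have h1 : (1 : G) ∈ S := by
    have := hmul a ha a⁻¹ (hinv a ha)
    simpa using this
  exact ⟨{ carrier := S,
           mul_mem' := fun {x y} hx hy => hmul x hx y hy,
           one_mem' := h1,
           inv_mem' := fun {x} hx => hinv x hx }, rfl⟩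
end

section
/- Let G be a Weil-adapted Hausdorff topological group and let S be a subsemigroup of G that is locally compact in the subspace topology. Then S is a closed subgroup of G. -/
/-- Any subsemigroup of a Weil-adapted Hausdorff topological group that is
locally compact in the subspace topology is a closed subgroup. -/
theorem stmt_8 {G : Type*} [Group G] [TopologicalSpace G] [IsTopologicalGroup G]
    [T2Space G]
    (hWeil : ∀ S : Set G, S.Nonempty → (∀ a ∈ S, ∀ b ∈ S, a * b ∈ S) →
      ∃ H : Subgroup G, closure S = (H : Set G))
    (S : Set G) (hne : S.Nonempty) (hmul : ∀ a ∈ S, ∀ b ∈ S, a * b ∈ S)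
    (hlc : LocallyCompactSpace S) :
    IsClosed S ∧ ∃ H : Subgroup G, S = (H : Set G) := by
  -- Step 1: every point of S has an open neighbourhood V with V ∩ closure S ⊆ S
  have key : ∀ s ∈ S, ∃ V : Set G, IsOpen V ∧ s ∈ V ∧ V ∩ closure S ⊆ S := by
    intro s hs
    obtain ⟨K, hKmem, -, hKc⟩ :=
      hlc.local_compact_nhds ⟨s, hs⟩ Set.univ Filter.univ_mem
    rw [mem_nhds_iff] at hKmem
    obtain ⟨t, htK, htopen, hst⟩ := hKmem
    obtain ⟨V, hVopen, hVt⟩ := isOpen_induced_iff.mp htopen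
    refine ⟨V, hVopen, ?_, ?_⟩
    · have : (⟨s, hs⟩ : S) ∈ t := hst
      rw [← hVt] at this; exact this
    · set K' : Set G := Subtype.val '' K with hK'
      have hK'c : IsCompact K' := hKc.image continuous_subtype_val
      have hK'S : K' ⊆ S := by rintro x ⟨⟨y, hy⟩, -, rfl⟩; exact hy
      have hSV : V ∩ S ⊆ K' := by
        rintro x ⟨hxV, hxS⟩
        refine ⟨⟨x, hxS⟩, ?_, rfl⟩
        apply htK
        rw [← hVt]
        exact hxV
      calc V ∩ closure S ⊆ closure (V ∩ S) := hVopen.inter_closure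
        _ ⊆ closure K' := closure_mono hSV
        _ = K' := hK'c.isClosed.closure_eq
        _ ⊆ S := hK'S
  -- The union of all such V
  set U : Set G := {x | ∃ V : Set G, IsOpen V ∧ V ∩ closure S ⊆ S ∧ x ∈ V} with hU
  have hUopen : IsOpen U := by
    have : U = ⋃₀ {V : Set G | IsOpen V ∧ V ∩ closure S ⊆ S} := by
      ext x
      constructor
      · rintro ⟨V, h1, h2, h3⟩; exact ⟨V, ⟨h1, h2⟩, h3⟩
      · rintro ⟨V, ⟨h1, h2⟩, h3⟩; exact ⟨V, h1, h2, h3⟩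
    rw [this]
    exact isOpen_sUnion fun V hV => hV.1
  have hSU : S ⊆ U := fun s hs => by
    obtain ⟨V, h1, h2, h3⟩ := key s hs
    exact ⟨V, h1, h3, h2⟩
  have hUS : U ∩ closure S ⊆ S := by
    rintro x ⟨⟨V, h1, h2, h3⟩, hxc⟩
    exact h2 ⟨h3, hxc⟩
  -- Step 2: the closure is a subgroup
  obtain ⟨H, hH⟩ := hWeil S hne hmul
  -- Step 3: closure S ⊆ S
  have hclosed : closure S ⊆ S := by
    intro h hhc
    have hhH : h ∈ H := by have := hhc; rwa [hH] at this
    obtain ⟨s₀, hs₀⟩ := hne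
    have hs₀H : s₀ ∈ H := by have := subset_closure hs₀; rwa [hH] at this
    -- the open set W := (g ↦ h * g⁻¹) ⁻¹' U contains s₀⁻¹ * h ∈ closure S
    set W : Set G := (fun g => h * g⁻¹) ⁻¹' U with hW
    have hWopen : IsOpen W :=
      hUopen.preimage (by continuity)
    have hgW : s₀⁻¹ * h ∈ W := by
      have : h * (s₀⁻¹ * h)⁻¹ = s₀ := by group
      simp only [hW, Set.mem_preimage, this]
      exact hSU hs₀
    have hgc : s₀⁻¹ * h ∈ closure S := by
      rw [hH]; exact H.mul_mem (H.inv_mem hs₀H) hhH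
    obtain ⟨t, htW, htS⟩ :=
      mem_closure_iff.mp hgc W hWopen hgW
    -- t ∈ S and h * t⁻¹ ∈ U ∩ closure S ⊆ S, so h = (h * t⁻¹) * t ∈ S
    have htH : t ∈ H := by have := subset_closure htS; rwa [hH] at this
    have hhtH : h * t⁻¹ ∈ closure S := by
      rw [hH]; exact H.mul_mem hhH (H.inv_mem htH)
    have hhtS : h * t⁻¹ ∈ S := hUS ⟨htW, hhtH⟩
    have := hmul _ hhtS _ htS
    simpa using this
  have hSc : S = closure S := Set.Subset.antisymm subset_closure hclosed
  refine ⟨?_, H, ?_⟩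
  · rw [hSc]; exact isClosed_closure
  · rw [hSc, hH]
end

section
/- Let G be a precompact Hausdorff topological group and let S be a subsemigroup of G that is locally compact in the subspace topology. Then S is a subgroup of G. -/
open Filter Set
open scoped Uniformity Topology

/-- In a totally bounded group, `a⁻¹` lies in the closure of the positive powers of `a`. -/
lemma key_inv_mem {G : Type*} [Group G] [UniformSpace G] [IsUniformGroup G]
    (hpre : TotallyBounded (Set.univ : Set G)) (a : G) :
    a⁻¹ ∈ closure (Set.range fun n : ℕ => a ^ (n + 1)) := by
  set seq : ℕ → G := fun n => a ^ (n + 1) with hseq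
  have hnb : (Filter.map seq Filter.atTop).NeBot := map_neBot
  set F : Ultrafilter G := Ultrafilter.of (Filter.map seq Filter.atTop) with hF
  have hFle : (F : Filter G) ≤ Filter.map seq Filter.atTop := Ultrafilter.of_le _
  have hFc : Cauchy (F : Filter G) :=
    totallyBounded_iff_ultrafilter.mp hpre F (le_principal_iff.2 univ_mem)
  have h2 : (F : Filter G) ×ˢ (F : Filter G) ≤ 𝓤 G := hFc.2
  rw [uniformity_eq_comap_nhds_one] at h2
  have ht1 : Tendsto (fun p : G × G => p.2 / p.1) ((F : Filter G) ×ˢ (F : Filter G))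
      (𝓝 (1 : G)) := by
    rwa [Filter.tendsto_iff_comap]
  have ht : Tendsto (fun p : G × G => p.2 / p.1 * a⁻¹) ((F : Filter G) ×ˢ (F : Filter G))
      (𝓝 (a⁻¹ : G)) := by
    simpa using ht1.mul_const a⁻¹
  rw [mem_closure_iff_nhds]
  intro W hW
  obtain ⟨A, hA, B, hB, hAB⟩ := Filter.mem_prod_iff.mp (ht hW)
  -- pick x = a^(n+1) in A
  have hrange : Set.range seq ∈ (F : Filter G) := hFle range_mem_map
  obtain ⟨x, hxA, n, hxn⟩ : ∃ x, x ∈ A ∧ ∃ n, seq n = x := by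
    obtain ⟨x, hx1, hx2⟩ := Filter.nonempty_of_mem (Filter.inter_mem hA hrange)
    exact ⟨x, hx1, hx2⟩
  -- pick y = a^(k+1), k ≥ n + 2, in B
  have htail : seq '' (Set.Ici (n + 2)) ∈ (F : Filter G) := by
    refine hFle ?_
    rw [Filter.mem_map]
    exact Filter.mem_of_superset (Filter.mem_atTop (n + 2)) fun k hk => ⟨k, hk, rfl⟩
  obtain ⟨y, hyB, k, hk, hyk⟩ : ∃ y, y ∈ B ∧ ∃ k, n + 2 ≤ k ∧ seq k = y := by
    obtain ⟨y, hy1, ⟨k, hk1, hk2⟩⟩ := Filter.nonempty_of_mem (Filter.inter_mem hB htail)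
    exact ⟨y, hy1, k, hk1, hk2⟩
  refine ⟨y / x * a⁻¹, hAB (Set.mk_mem_prod hxA hyB), ?_⟩
  refine ⟨k - n - 2, ?_⟩
  subst hxn hyk
  simp only [hseq]
  have hkk : k + 1 = (k - n - 2 + 1) + (n + 2) := by omega
  rw [hkk, pow_add]
  group
  rw [div_eq_mul_inv, ← zpow_neg, ← zpow_add, ← zpow_add]
  congr 1
  ring

/-- Any locally compact subsemigroup of a precompact Hausdorff topological
group is a subgroup. -/
theorem stmt_9 {G : Type*} [Group G] [UniformSpace G] [IsUniformGroup G]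
    [T2Space G] (hpre : TotallyBounded (Set.univ : Set G))
    (S : Set G) (hne : S.Nonempty) (hmul : ∀ a ∈ S, ∀ b ∈ S, a * b ∈ S)
    (hlc : LocallyCompactSpace S) :
    ∃ H : Subgroup G, S = (H : Set G) := by
  -- powers stay in S
  have hpow : ∀ a ∈ S, ∀ n : ℕ, a ^ (n + 1) ∈ S := by
    intro a ha n
    induction n with
    | zero => simpa using ha
    | succ m ih => rw [pow_succ]; exact hmul _ ih _ ha
  set T : Set G := closure S with hT
  have hST : S ⊆ T := subset_closure
  -- T is closed under multiplication
  have hTmul : ∀ x ∈ T, ∀ y ∈ T, x * y ∈ T := fun x hx y hy =>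
    map_mem_closure₂ continuous_mul hx hy hmul
  -- inverses of elements of S are in T
  have hSinv : ∀ a ∈ S, a⁻¹ ∈ T := by
    intro a ha
    have h1 := key_inv_mem hpre a
    refine closure_mono ?_ h1
    rintro _ ⟨n, rfl⟩
    exact hpow a ha n
  -- T is closed under inverses
  have hTinv : ∀ x ∈ T, x⁻¹ ∈ T := by
    intro x hx
    have : x⁻¹ ∈ closure T := map_mem_closure continuous_inv hx hSinv
    rwa [closure_closure] at this
  obtain ⟨a, ha⟩ := hne
  have h1T : (1 : G) ∈ T := by
    have := hTmul a (hST ha) a⁻¹ (hSinv a ha)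
    simpa using this
  -- S is open in T: find open V with V ∩ T = S
  have hopen : ∀ s ∈ S, ∃ U : Set G, IsOpen U ∧ s ∈ U ∧ U ∩ T ⊆ S := by
    intro s hs
    obtain ⟨K, hKn, -, hKc⟩ :=
      LocallyCompactSpace.local_compact_nhds (⟨s, hs⟩ : S) Set.univ Filter.univ_mem
    rw [nhds_subtype] at hKn
    obtain ⟨V, hV, hVK⟩ := hKn
    obtain ⟨U, hUV, hUo, hsU⟩ := mem_nhds_iff.mp hV
    refine ⟨U, hUo, hsU, ?_⟩
    have hKS : IsCompact (Subtype.val '' K) := hKc.image continuous_subtype_val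
    have hKcl : IsClosed (Subtype.val '' K) := hKS.isClosed
    have hsub : U ∩ S ⊆ Subtype.val '' K := by
      rintro g ⟨hgU, hgS⟩
      exact ⟨⟨g, hgS⟩, hVK (hUV hgU), rfl⟩
    have hsub2 : U ∩ T ⊆ Subtype.val '' K := by
      intro g hg
      have : g ∈ closure (U ∩ S) := hUo.inter_closure hg
      have : g ∈ closure (Subtype.val '' K) := closure_mono hsub this
      rwa [hKcl.closure_eq] at this
    intro g hg
    obtain ⟨⟨g', hg'⟩, -, rfl⟩ := hsub2 hg
    exact hg'
  choose U hUo hUmem hUsub using hopen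
  -- T ⊆ S
  have hTS : T ⊆ S := by
    intro g hg
    set V : Set G := ⋃ (s : S), U s s.2 with hV
    have hVo : IsOpen V := isOpen_iUnion fun s => hUo s s.2
    have hVT : V ∩ T ⊆ S := by
      rintro x ⟨hx1, hx2⟩
      obtain ⟨_, ⟨s, rfl⟩, hxU⟩ := hx1
      exact hUsub s s.2 ⟨hxU, hx2⟩
    have hSV : S ⊆ V := fun s hs => Set.mem_iUnion.2 ⟨⟨s, hs⟩, hUmem s hs⟩
    -- consider W = (fun x => g * x⁻¹) ⁻¹' V, open, meets T at a⁻¹ * g... 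
    set W : Set G := (fun x => g * x⁻¹) ⁻¹' V with hW
    have hWo : IsOpen W := hVo.preimage (by continuity)
    have hmemW : a⁻¹ * g ∈ W ∩ T := by
      constructor
      · show g * (a⁻¹ * g)⁻¹ ∈ V
        have : g * (a⁻¹ * g)⁻¹ = a := by group
        rw [this]; exact hSV ha
      · exact hTmul _ (hSinv a ha) _ hg
    -- W open meets T = closure S, so meets S
    obtain ⟨s, hsW, hsS⟩ : (W ∩ S).Nonempty := by
      have : a⁻¹ * g ∈ closure S := hmemW.2
      rw [mem_closure_iff] at this
      exact this W hWo hmemW.1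
    have hgs : g * s⁻¹ ∈ S := hVT ⟨hsW, hTmul g hg s⁻¹ (hSinv s hsS)⟩
    have : (g * s⁻¹) * s ∈ S := hmul _ hgs _ hsS
    simpa using this
  refine ⟨{ carrier := S
            mul_mem' := fun hx hy => hmul _ hx _ hy
            one_mem' := hTS h1T
            inv_mem' := fun hx => hTS (hSinv _ hx) }, rfl⟩
end

section
/- Every compact Hausdorff topological group is Weil-adapted: for every element g of a compact Hausdorff topological group G, the closure of the set {g, g², g³, …} of positive powers of g is a subgroup of G. -/
/-- Every compact Hausdorff topological group is Weil-adapted: for each `g`,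
the closure of the set of positive powers of `g` is a subgroup. -/
theorem stmt_11 {G : Type*} [Group G] [TopologicalSpace G] [IsTopologicalGroup G]
    [T2Space G] [CompactSpace G] (g : G) :
    ∃ H : Subgroup G, closure {x : G | ∃ n : ℕ, 0 < n ∧ x = g ^ n} = (H : Set G) := by
  refine ⟨(Subgroup.zpowers g).topologicalClosure, ?_⟩
  have h1 : closure {x : G | ∃ n : ℕ, 0 < n ∧ x = g ^ n}
      = closure (Set.range (g ^ · : ℕ → G)) := by
    apply le_antisymm
    · exact closure_mono (fun x ⟨n, _, hx⟩ => ⟨n, hx.symm⟩)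
    · refine closure_minimal ?_ isClosed_closure
      rintro x ⟨n, rfl⟩
      rcases Nat.eq_zero_or_pos n with rfl | hn
      · -- g ^ 0 = 1 is a cluster point of the positive powers
        have h := mapClusterPt_one_atTop_pow g
        have hs : {x : G | ∃ n : ℕ, 0 < n ∧ x = g ^ n} ∈ Filter.map (g ^ · : ℕ → G) Filter.atTop := by
          refine Filter.mem_map.2 (Filter.mem_of_superset (Filter.Ici_mem_atTop 1) ?_)
          intro m hm
          exact ⟨m, hm, rfl⟩
        simpa using mem_closure_iff_clusterPt.2 (h.clusterPt.mono (Filter.le_principal_iff.2 hs))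
      · exact subset_closure ⟨n, hn, rfl⟩
  rw [h1, ← closure_range_zpow_eq_pow]
  show closure (Set.range (g ^ · : ℤ → G)) = closure (Subgroup.zpowers g : Set G)
  congr 1
end

section
/- In the circle group 𝕋 = ℝ/ℤ, the image S of the set {m + n√2 : m ∈ ℤ, n ∈ ℕ, n ≥ 1} under the quotient map ℝ → ℝ/ℤ is a subsemigroup of 𝕋 that is not a subgroup of 𝕋. -/
/-- In the circle group `𝕋 = ℝ/ℤ`, the image of `{m + n√2 : m ∈ ℤ, n ∈ ℕ, n ≥ 1}`
under the quotient map `ℝ → ℝ/ℤ` is a subsemigroup that is not a subgroup. -/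
theorem stmt_14 :
    let S : Set (AddCircle (1 : ℝ)) :=
      (fun x : ℝ => (x : AddCircle (1 : ℝ))) ''
        {x : ℝ | ∃ (m : ℤ) (n : ℕ), 1 ≤ n ∧ x = (m : ℝ) + (n : ℝ) * Real.sqrt 2}
    S.Nonempty ∧ (∀ a ∈ S, ∀ b ∈ S, a + b ∈ S) ∧
      ¬∃ H : AddSubgroup (AddCircle (1 : ℝ)), S = (H : Set (AddCircle (1 : ℝ))) := by
  intro S
  refine ⟨⟨((Real.sqrt 2 : ℝ) : AddCircle (1:ℝ)), (Real.sqrt 2 : ℝ), ⟨0, 1, le_refl 1, by push_cast; ring⟩, rfl⟩, ?_, ?_⟩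
  · rintro a ⟨x, ⟨m1, n1, hn1, hx⟩, rfl⟩ b ⟨y, ⟨m2, n2, hn2, hy⟩, rfl⟩
    refine ⟨x + y, ⟨m1 + m2, n1 + n2, le_trans hn1 (Nat.le_add_right _ _), ?_⟩, ?_⟩
    · rw [hx, hy]; push_cast; ring
    · exact (AddCircle.coe_add (p := (1:ℝ)) x y).symm
  · rintro ⟨H, hH⟩
    have h0 : (0 : AddCircle (1 : ℝ)) ∈ S := hH ▸ H.zero_mem
    obtain ⟨x, ⟨m, n, hn, hx⟩, hx0⟩ := h0
    rw [AddCircle.coe_eq_zero_iff] at hx0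
    obtain ⟨k, hk⟩ := hx0
    have : Irrational ((n : ℝ) * Real.sqrt 2) :=
      (irrational_sqrt_two.natCast_mul (by omega))
    have h2 : ((n : ℝ) * Real.sqrt 2) = ((k - m : ℤ) : ℝ) := by
      have : (k : ℝ) * 1 = (m : ℝ) + (n : ℝ) * Real.sqrt 2 := by
        rw [← hx]; simpa using hk
      push_cast
      linarith
    exact this ⟨((k - m : ℤ) : ℚ), by rw [h2]; norm_cast⟩
end
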